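/- Final step of the proof of Theorem 2: Let (x(·), u(·), ψ₀, ψ(·), λ(·)) be a Pontryagin extremal on [a,b], and let a(t) := (∂T/∂s)(t,x(t),u(t),0) ∈ ℝ and b(t) := (∂X/∂s)(t,x(t),u(t),0) ∈ ℝⁿ be differentiable functions on [a,b]. Suppose that for all t ∈ [a,b]: ψ₀·[(∂L/∂t)·a(t) + ⟨∂L/∂x, b(t)⟩ + L·ȧ(t)] + ⟨ψ(t), (∂φ/∂t)·a(t) + (∂φ/∂x)·b(t) + φ·ȧ(t) − ḃ(t)⟩ + ⟨λ(t), (∂ϕ/∂t)·a(t) + (∂ϕ/∂x)·b(t) + ϕ·ȧ(t)⟩ = 0, where all partial derivatives of L, φ, ϕ are evaluated at (t,x(t),u(t)). Then (d/dt)[⟨ψ(t), b(t)⟩ − H(t,x(t),u(t),ψ₀,ψ(t),λ(t))·a(t)] = 0 for all t ∈ [a,b], and hence t ↦ ⟨ψ(t), b(t)⟩ − H(t,x(t),u(t),ψ₀,ψ(t),λ(t))·a(t) is constant on [a,b]. -/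

import Mathlib

open Set RealInnerProductSpace

/-- The Hamiltonian of the constrained optimal control problem. -/
noncomputable def Ham {n r m : ℕ}
    (L : ℝ × EuclideanSpace ℝ (Fin n) × EuclideanSpace ℝ (Fin r) → ℝ)
    (φ : ℝ × EuclideanSpace ℝ (Fin n) × EuclideanSpace ℝ (Fin r) → EuclideanSpace ℝ (Fin n))
    (ϕ : ℝ × EuclideanSpace ℝ (Fin n) × EuclideanSpace ℝ (Fin r) → EuclideanSpace ℝ (Fin m))
    (t : ℝ) (x : EuclideanSpace ℝ (Fin n)) (u : EuclideanSpace ℝ (Fin r))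
    (ψ₀ : ℝ) (ψ : EuclideanSpace ℝ (Fin n)) (lam : EuclideanSpace ℝ (Fin m)) : ℝ :=
  ψ₀ * L (t, x, u) + ⟪ψ, φ (t, x, u)⟫ + ⟪lam, ϕ (t, x, u)⟫

/-- A Pontryagin extremal of the constrained optimal control problem on `[a,b]`. -/
noncomputable def IsPontryaginExtremal {n r m : ℕ}
    (L : ℝ × EuclideanSpace ℝ (Fin n) × EuclideanSpace ℝ (Fin r) → ℝ)
    (φ : ℝ × EuclideanSpace ℝ (Fin n) × EuclideanSpace ℝ (Fin r) → EuclideanSpace ℝ (Fin n))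
    (ϕ : ℝ × EuclideanSpace ℝ (Fin n) × EuclideanSpace ℝ (Fin r) → EuclideanSpace ℝ (Fin m))
    (a b : ℝ)
    (x : ℝ → EuclideanSpace ℝ (Fin n)) (u : ℝ → EuclideanSpace ℝ (Fin r))
    (ψ₀ : ℝ) (ψ : ℝ → EuclideanSpace ℝ (Fin n)) (lam : ℝ → EuclideanSpace ℝ (Fin m)) : Prop :=
  (∀ t ∈ Icc a b, DifferentiableAt ℝ x t ∧ DifferentiableAt ℝ u t ∧
      DifferentiableAt ℝ ψ t ∧ DifferentiableAt ℝ lam t) ∧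
  (∀ t ∈ Icc a b, deriv x t = φ (t, x t, u t)) ∧
  (∀ t ∈ Icc a b, ∀ v : EuclideanSpace ℝ (Fin n),
      ⟪deriv ψ t, v⟫ =
        -(ψ₀ * fderiv ℝ L (t, x t, u t) (0, v, 0)
          + ⟪ψ t, fderiv ℝ φ (t, x t, u t) (0, v, 0)⟫
          + ⟪lam t, fderiv ℝ ϕ (t, x t, u t) (0, v, 0)⟫)) ∧
  (∀ t ∈ Icc a b, ∀ v : EuclideanSpace ℝ (Fin r),
      ψ₀ * fderiv ℝ L (t, x t, u t) (0, 0, v)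
        + ⟪ψ t, fderiv ℝ φ (t, x t, u t) (0, 0, v)⟫
        + ⟪lam t, fderiv ℝ ϕ (t, x t, u t) (0, 0, v)⟫ = 0) ∧
  (∀ t ∈ Icc a b,
      deriv (fun τ => Ham L φ ϕ τ (x τ) (u τ) ψ₀ (ψ τ) (lam τ)) t =
        ψ₀ * fderiv ℝ L (t, x t, u t) (1, 0, 0)
          + ⟪ψ t, fderiv ℝ φ (t, x t, u t) (1, 0, 0)⟫
          + ⟪lam t, fderiv ℝ ϕ (t, x t, u t) (1, 0, 0)⟫)

/-- **Final step of the proof of Theorem 2.** Along a Pontryagin extremal, if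
`a(t) := ∂T/∂s|₀` and `b(t) := ∂X/∂s|₀` satisfy the combined identity (12),
then `(d/dt)[⟨ψ(t), b(t)⟩ − H·a(t)] = 0`, hence `⟨ψ(t), b(t)⟩ − H·a(t)`
is constant on `[a,b]`. -/
theorem noether_final_step
    {n r m : ℕ}
    (L : ℝ × EuclideanSpace ℝ (Fin n) × EuclideanSpace ℝ (Fin r) → ℝ)
    (φ : ℝ × EuclideanSpace ℝ (Fin n) × EuclideanSpace ℝ (Fin r) → EuclideanSpace ℝ (Fin n))
    (ϕ : ℝ × EuclideanSpace ℝ (Fin n) × EuclideanSpace ℝ (Fin r) → EuclideanSpace ℝ (Fin m))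
    (hL : ContDiff ℝ 1 L) (hφ : ContDiff ℝ 1 φ) (hϕ : ContDiff ℝ 1 ϕ)
    (a b : ℝ) (hab : a < b)
    (x : ℝ → EuclideanSpace ℝ (Fin n)) (u : ℝ → EuclideanSpace ℝ (Fin r))
    (ψ₀ : ℝ) (ψ : ℝ → EuclideanSpace ℝ (Fin n)) (lam : ℝ → EuclideanSpace ℝ (Fin m))
    (hext : IsPontryaginExtremal L φ ϕ a b x u ψ₀ ψ lam)
    (aF : ℝ → ℝ) (bF : ℝ → EuclideanSpace ℝ (Fin n))
    (haF : ∀ t ∈ Icc a b, DifferentiableAt ℝ aF t)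
    (hbF : ∀ t ∈ Icc a b, DifferentiableAt ℝ bF t)
    -- the combined identity (12)
    (hid : ∀ t ∈ Icc a b,
      ψ₀ * (fderiv ℝ L (t, x t, u t) (aF t, 0, 0)
            + fderiv ℝ L (t, x t, u t) (0, bF t, 0)
            + L (t, x t, u t) * deriv aF t)
        + ⟪ψ t, fderiv ℝ φ (t, x t, u t) (aF t, 0, 0)
            + fderiv ℝ φ (t, x t, u t) (0, bF t, 0)
            + (deriv aF t) • φ (t, x t, u t)
            - deriv bF t⟫
        + ⟪lam t, fderiv ℝ ϕ (t, x t, u t) (aF t, 0, 0)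
            + fderiv ℝ ϕ (t, x t, u t) (0, bF t, 0)
            + (deriv aF t) • ϕ (t, x t, u t)⟫ = 0) :
    (∀ t ∈ Icc a b,
      deriv (fun τ =>
        ⟪ψ τ, bF τ⟫ - Ham L φ ϕ τ (x τ) (u τ) ψ₀ (ψ τ) (lam τ) * aF τ) t = 0)
    ∧
    ∃ C : ℝ, ∀ t ∈ Icc a b,
      ⟪ψ t, bF t⟫ - Ham L φ ϕ t (x t) (u t) ψ₀ (ψ t) (lam t) * aF t = C := by
  obtain ⟨hdiff, hdx, hdψ, hdu0, hdH⟩ := hext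
  have hGdiff : ∀ t ∈ Icc a b,
      DifferentiableAt ℝ (fun τ => Ham L φ ϕ τ (x τ) (u τ) ψ₀ (ψ τ) (lam τ)) t := by
    intro t ht
    obtain ⟨hx, hu, hψd, hlamd⟩ := hdiff t ht
    have hcurve : DifferentiableAt ℝ
        (fun τ => ((τ, x τ, u τ) : ℝ × EuclideanSpace ℝ (Fin n) × EuclideanSpace ℝ (Fin r))) t :=
      differentiableAt_id.prodMk (hx.prodMk hu)
    have hLc : DifferentiableAt ℝ (fun τ => L (τ, x τ, u τ)) t :=
      ((hL.differentiable one_ne_zero) _).comp t hcurve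
    have hφc : DifferentiableAt ℝ (fun τ => φ (τ, x τ, u τ)) t :=
      ((hφ.differentiable one_ne_zero) _).comp t hcurve
    have hϕc : DifferentiableAt ℝ (fun τ => ϕ (τ, x τ, u τ)) t :=
      ((hϕ.differentiable one_ne_zero) _).comp t hcurve
    simp only [Ham]
    exact (((differentiableAt_const ψ₀).mul hLc).add (hψd.inner ℝ hφc)).add (hlamd.inner ℝ hϕc)
  have hFdiff : ∀ t ∈ Icc a b, DifferentiableAt ℝ
      (fun τ => ⟪ψ τ, bF τ⟫ - Ham L φ ϕ τ (x τ) (u τ) ψ₀ (ψ τ) (lam τ) * aF τ) t := by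
    intro t ht
    obtain ⟨hx, hu, hψd, hlamd⟩ := hdiff t ht
    exact (hψd.inner ℝ (hbF t ht)).sub ((hGdiff t ht).mul (haF t ht))
  have key : ∀ t ∈ Icc a b,
      deriv (fun τ =>
        ⟪ψ τ, bF τ⟫ - Ham L φ ϕ τ (x τ) (u τ) ψ₀ (ψ τ) (lam τ) * aF τ) t = 0 := by
    intro t ht
    obtain ⟨hx, hu, hψd, hlamd⟩ := hdiff t ht
    have hinner : DifferentiableAt ℝ (fun τ => ⟪ψ τ, bF τ⟫) t := hψd.inner ℝ (hbF t ht)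
    have hsL : fderiv ℝ L (t, x t, u t) (aF t, 0, 0)
        = aF t * fderiv ℝ L (t, x t, u t) (1, 0, 0) := by
      have h : ((aF t, 0, 0) : ℝ × EuclideanSpace ℝ (Fin n) × EuclideanSpace ℝ (Fin r))
          = aF t • ((1, 0, 0) : ℝ × EuclideanSpace ℝ (Fin n) × EuclideanSpace ℝ (Fin r)) := by
        simp [Prod.smul_def]
      rw [h, map_smul, smul_eq_mul]
    have hsφ : fderiv ℝ φ (t, x t, u t) (aF t, 0, 0)
        = aF t • fderiv ℝ φ (t, x t, u t) (1, 0, 0) := by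
      have h : ((aF t, 0, 0) : ℝ × EuclideanSpace ℝ (Fin n) × EuclideanSpace ℝ (Fin r))
          = aF t • ((1, 0, 0) : ℝ × EuclideanSpace ℝ (Fin n) × EuclideanSpace ℝ (Fin r)) := by
        simp [Prod.smul_def]
      rw [h, map_smul]
    have hsϕ : fderiv ℝ ϕ (t, x t, u t) (aF t, 0, 0)
        = aF t • fderiv ℝ ϕ (t, x t, u t) (1, 0, 0) := by
      have h : ((aF t, 0, 0) : ℝ × EuclideanSpace ℝ (Fin n) × EuclideanSpace ℝ (Fin r))
          = aF t • ((1, 0, 0) : ℝ × EuclideanSpace ℝ (Fin n) × EuclideanSpace ℝ (Fin r)) := by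
        simp [Prod.smul_def]
      rw [h, map_smul]
    have hid' := hid t ht
    rw [hsL, hsφ, hsϕ] at hid'
    simp only [inner_add_right, inner_sub_right, real_inner_smul_right] at hid'
    rw [deriv_fun_sub (g := fun τ => Ham L φ ϕ τ (x τ) (u τ) ψ₀ (ψ τ) (lam τ) * aF τ) hinner ((hGdiff t ht).mul (haF t ht)),
        deriv_inner_apply ℝ hψd (hbF t ht),
        deriv_fun_mul (hGdiff t ht) (haF t ht),
        hdH t ht, hdψ t ht (bF t)]
    simp only [Ham]
    linear_combination -hid'
  refine ⟨key, ⟨⟪ψ a, bF a⟫ - Ham L φ ϕ a (x a) (u a) ψ₀ (ψ a) (lam a) * aF a, ?_⟩⟩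
  intro t ht
  refine constant_of_derivWithin_zero
    (fun s hs => (hFdiff s hs).differentiableWithinAt) ?_ t ht
  intro s hs
  rw [(hFdiff s (Ico_subset_Icc_self hs)).derivWithin
    ((uniqueDiffOn_Icc hab) s (Ico_subset_Icc_self hs))]
  exact key s (Ico_subset_Icc_self hs)
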